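/- Fix n ≥ 2 and let O be the interleaved ordering of {0,1}^n. For any i ∈ [n] and b ∈ {0,1}, let A = {α : α_i = b}. Then the O-greatest element of A lies among the last two positions of O; consequently, the number of elements of S∖A = {α : α_i = 1−b} that precede some element of A under O is at least 2^{n−1} − 1. -/

import Mathlib

/-- The assignment encoding the number `m` in binary, most significant bit first. -/
def ofNat (n m : ℕ) : Fin n → Bool := fun i => m.testBit (n - 1 - (i : ℕ))

/-- Bitwise complement of an assignment. -/
def compl' {n : ℕ} (α : Fin n → Bool) : Fin n → Bool := fun i => !(α i)

/-- The interleaved ordering `β₁, β̄₁, β₂, β̄₂, …, β_{N/2}, β̄_{N/2}` of `{0,1}^n`,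
where `β₁, …, β_N` is the lexicographic enumeration and `β̄` is the bitwise complement. -/
def interleave (n : ℕ) : List (Fin n → Bool) :=
  (List.range (2 ^ (n - 1))).flatMap (fun k => [ofNat n k, compl' (ofNat n k)])

lemma ofNat_inj {n k k' : ℕ} (hk : k < 2 ^ n) (hk' : k' < 2 ^ n)
    (h : ofNat n k = ofNat n k') : k = k' := by
  apply Nat.eq_of_testBit_eq
  intro j
  rcases lt_or_ge j n with hj | hj
  · have := congrFun h ⟨n - 1 - j, by omega⟩
    simpa [ofNat, Nat.sub_sub_self (by omega : j ≤ n - 1)] using this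
  · rw [Nat.testBit_eq_false_of_lt (lt_of_lt_of_le hk (Nat.pow_le_pow_right (by norm_num) hj)),
      Nat.testBit_eq_false_of_lt (lt_of_lt_of_le hk' (Nat.pow_le_pow_right (by norm_num) hj))]

lemma ofNat_zero_bit {n k : ℕ} (hn : 1 ≤ n) (hk : k < 2 ^ (n - 1)) :
    ofNat n k ⟨0, by omega⟩ = false := by
  simp only [ofNat]
  exact Nat.testBit_eq_false_of_lt (by simpa using hk)

lemma ofNat_ne_compl {n k k' : ℕ} (hn : 1 ≤ n) (hk : k < 2 ^ (n - 1)) (hk' : k' < 2 ^ (n - 1)) :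
    ofNat n k ≠ compl' (ofNat n k') := by
  intro h
  have := congrFun h ⟨0, by omega⟩
  rw [ofNat_zero_bit hn hk, compl', ofNat_zero_bit hn hk'] at this
  simp at this

/-- Pick whichever of `α`, `compl' α` has `i`-th bit `c`. -/
def pick {n : ℕ} (i : Fin n) (c : Bool) (α : Fin n → Bool) : Fin n → Bool :=
  if α i = c then α else compl' α

lemma pick_bit {n : ℕ} (i : Fin n) (c : Bool) (α : Fin n → Bool) : pick i c α i = c := by
  rw [pick]
  split
  · assumption
  · rename_i h
    simp only [compl']
    cases hb : α i <;> cases c <;> simp_all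

lemma pick_eq_or {n : ℕ} (i : Fin n) (c : Bool) (α : Fin n → Bool) :
    pick i c α = α ∨ pick i c α = compl' α := by
  rw [pick]; split <;> simp

lemma pick_ofNat_inj {n k k' : ℕ} (i : Fin n) (c : Bool) (hn : 1 ≤ n)
    (hk : k < 2 ^ (n - 1)) (hk' : k' < 2 ^ (n - 1))
    (h : pick i c (ofNat n k) = pick i c (ofNat n k')) : k = k' := by
  have hpow : 2 ^ (n - 1) ≤ 2 ^ n := Nat.pow_le_pow_right (by norm_num) (by omega)
  rcases pick_eq_or i c (ofNat n k) with h1 | h1 <;>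
    rcases pick_eq_or i c (ofNat n k') with h2 | h2 <;> rw [h1, h2] at h
  · exact ofNat_inj (by omega) (by omega) h
  · exact (ofNat_ne_compl hn hk hk' h).elim
  · exact (ofNat_ne_compl hn hk' hk h.symm).elim
  · exact ofNat_inj (by omega) (by omega)
      (funext fun j => Bool.not_inj (congrFun h j))

theorem interleave_max_last_two {n : ℕ} (hn : 2 ≤ n) (i : Fin n) (b : Bool) :
    (∀ mx : Fin n → Bool, mx i = b →
        (∀ α : Fin n → Bool, α i = b → (interleave n).idxOf α ≤ (interleave n).idxOf mx) →
        2 ^ n - 2 ≤ (interleave n).idxOf mx) ∧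
    2 ^ (n - 1) - 1 ≤
      Nat.card {α' : Fin n → Bool // α' i = !b ∧
        ∃ α : Fin n → Bool, α i = b ∧ (interleave n).idxOf α' < (interleave n).idxOf α} := by
  have hn1 : 1 ≤ n := by omega
  set K : ℕ := 2 ^ (n - 1) - 1 with hK
  have hKpos : 1 ≤ 2 ^ (n - 1) := Nat.one_le_two_pow
  have hKlt : K < 2 ^ (n - 1) := by omega
  have h2K : 2 * 2 ^ (n - 1) = 2 ^ n := by
    rw [← pow_succ']
    congr 1
    omega
  set L : List (Fin n → Bool) :=
    (List.range K).flatMap (fun k => [ofNat n k, compl' (ofNat n k)]) with hL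
  have hsplit : interleave n = L ++ [ofNat n K, compl' (ofNat n K)] := by
    rw [interleave, show 2 ^ (n - 1) = K + 1 by omega, List.range_succ, List.flatMap_append]
    rfl
  have hLlen : L.length = 2 * K := by
    rw [hL, List.length_flatMap]
    have : (fun k : ℕ => [ofNat n k, compl' (ofNat n k)].length) = fun _ => 2 := rfl
    rw [this, List.map_const', List.sum_replicate, List.length_range, smul_eq_mul, mul_comm]
  -- membership in L
  have hmemL : ∀ a : Fin n → Bool, a ∈ L →
      ∃ k, k < K ∧ (a = ofNat n k ∨ a = compl' (ofNat n k)) := by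
    intro a ha
    rw [hL, List.mem_flatMap] at ha
    obtain ⟨k, hk, hak⟩ := ha
    rw [List.mem_range] at hk
    simp only [List.mem_cons, List.mem_singleton] at hak
    exact ⟨k, hk, by tauto⟩
  -- the maximal element α*
  have hαsb : pick i b (ofNat n K) i = b := pick_bit i b (ofNat n K)
  have hαs_notmem : pick i b (ofNat n K) ∉ L := by
    intro hmem
    obtain ⟨k, hk, hak⟩ := hmemL _ hmem
    have hk2 : k < 2 ^ (n - 1) := by omega
    have hne : k ≠ K := by omega
    rcases pick_eq_or i b (ofNat n K) with h1 | h1 <;> rw [h1] at hak <;>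
      rcases hak with hak | hak
    · exact hne ((ofNat_inj (lt_of_lt_of_le hKlt (Nat.pow_le_pow_right (by norm_num) (by omega)))
        (lt_of_lt_of_le hk2 (Nat.pow_le_pow_right (by norm_num) (by omega))) hak).symm ▸ rfl)
    · exact ofNat_ne_compl hn1 hKlt hk2 hak
    · exact (ofNat_ne_compl hn1 hk2 hKlt hak.symm).elim
    · exact hne (ofNat_inj (lt_of_lt_of_le hKlt (Nat.pow_le_pow_right (by norm_num) (by omega)))
        (lt_of_lt_of_le hk2 (Nat.pow_le_pow_right (by norm_num) (by omega)))
        (funext fun j => Bool.not_inj (congrFun hak j))).symm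
  have hαs_idx : 2 ^ n - 2 ≤ (interleave n).idxOf (pick i b (ofNat n K)) := by
    rw [hsplit, List.idxOf_append_of_notMem hαs_notmem, hLlen]
    omega
  constructor
  · intro mx _ hmax
    exact le_trans hαs_idx (hmax _ hαsb)
  · -- counting
    have hγmem : ∀ k, k < K → pick i (!b) (ofNat n k) ∈ L := by
      intro k hk
      rw [hL, List.mem_flatMap]
      refine ⟨k, List.mem_range.mpr hk, ?_⟩
      rcases pick_eq_or i (!b) (ofNat n k) with h1 | h1 <;> rw [h1] <;> simp
    have hγidx : ∀ k, k < K →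
        (interleave n).idxOf (pick i (!b) (ofNat n k)) < 2 ^ n - 2 := by
      intro k hk
      have hmem := hγmem k hk
      rw [hsplit, List.idxOf_append_of_mem hmem]
      calc L.idxOf (pick i (!b) (ofNat n k)) < L.length := List.idxOf_lt_length_iff.mpr hmem
        _ = 2 * K := hLlen
        _ ≤ 2 ^ n - 2 := by omega
    refine le_trans (le_of_eq (by simp)) (Nat.card_le_card_of_injective
      (fun k : Fin K => (⟨pick i (!b) (ofNat n k), pick_bit i (!b) (ofNat n k),
        pick i b (ofNat n K), hαsb, lt_of_lt_of_le (hγidx k k.2) hαs_idx⟩ :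
        {α' : Fin n → Bool // α' i = !b ∧
          ∃ α : Fin n → Bool, α i = b ∧
            (interleave n).idxOf α' < (interleave n).idxOf α})) ?_)
    intro k k' h
    have hval : pick i (!b) (ofNat n (k : ℕ)) = pick i (!b) (ofNat n (k' : ℕ)) :=
      congrArg Subtype.val h
    exact Fin.ext (pick_ofNat_inj i (!b) hn1 (by omega) (by omega) hval)
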